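/- Let φ be defined on words over {1,…,d} as the number of non-crossing perfect matchings compatible with the letters (φ(I) = # of non-crossing perfect matchings π of the positions of I with equal letters on each pair). Then φ is tracial: φ(I·J) = φ(J·I) for all words I, J. -/

import Mathlib

/-- A non-crossing perfect matching of the positions of the word `w`, compatible
with the letters of `w`. -/
def IsNCPerfectMatching (w : List ℕ) (M : Finset (ℕ × ℕ)) : Prop :=
  (∀ pq ∈ M, pq.1 < pq.2 ∧ pq.2 < w.length ∧ w[pq.1]? = w[pq.2]?) ∧
  (∀ i, i < w.length → ∃! pq, pq ∈ M ∧ (pq.1 = i ∨ pq.2 = i)) ∧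
  (∀ pq ∈ M, ∀ rs ∈ M, ¬(pq.1 < rs.1 ∧ rs.1 < pq.2 ∧ pq.2 < rs.2))

/-- `ncφ w` is the number of non-crossing perfect matchings compatible with `w`. -/
noncomputable def ncφ (w : List ℕ) : ℕ :=
  Nat.card {M : Finset (ℕ × ℕ) // IsNCPerfectMatching w M}

/-- Rotating a pair of positions one step: position `i+1` becomes `i`, position `0`
becomes `wl` (the last position of the rotated word of length `wl+1`). -/
def rotF (wl : ℕ) (pq : ℕ × ℕ) : ℕ × ℕ :=
  if pq.1 = 0 then (pq.2 - 1, wl) else (pq.1 - 1, pq.2 - 1)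

/-- Inverse of `rotF` on valid pairs. -/
def rotG (wl : ℕ) (rs : ℕ × ℕ) : ℕ × ℕ :=
  if rs.2 = wl then (0, rs.1 + 1) else (rs.1 + 1, rs.2 + 1)

lemma rotG_rotF (wl : ℕ) (pq : ℕ × ℕ) (h1 : pq.1 < pq.2) (h2 : pq.2 < wl + 1) :
    rotG wl (rotF wl pq) = pq := by
  rcases pq with ⟨p, q⟩
  simp only at h1 h2
  by_cases hp : p = 0
  · subst hp
    have e : q - 1 + 1 = q := by omega
    simp [rotF, rotG, e]
  · have hq : ¬(q - 1 = wl) := by omega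
    have h3 : p - 1 + 1 = p := by omega
    have h4 : q - 1 + 1 = q := by omega
    simp [rotF, rotG, hp, hq, h3, h4]

/-- The one-step rotation preserves non-crossing perfect matchings. -/
lemma rot_preserve (a : ℕ) (w : List ℕ) (M : Finset (ℕ × ℕ))
    (h : IsNCPerfectMatching (a :: w) M) :
    IsNCPerfectMatching (w ++ [a]) (M.image (rotF w.length)) := by
  obtain ⟨h1, h2, h3⟩ := h
  set wl := w.length with hwl
  have hlen : (a :: w).length = wl + 1 := by simp [hwl]
  have hlen' : (w ++ [a]).length = wl + 1 := by simp [hwl]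
  have hb : ∀ pq ∈ M, pq.1 < pq.2 ∧ pq.2 < wl + 1 := by
    intro pq hpq
    have := h1 pq hpq
    rw [hlen] at this
    exact ⟨this.1, this.2.1⟩
  have hget : ∀ i, i < wl → (w ++ [a])[i]? = (a :: w)[i + 1]? := by
    intro i hi
    rw [List.getElem?_append_left (by omega), List.getElem?_cons_succ]
  have hgetl : (w ++ [a])[wl]? = (a :: w)[0]? := by
    rw [hwl, List.getElem?_concat_length, List.getElem?_cons_zero]
  refine ⟨?_, ?_, ?_⟩
  · -- condition 1
    intro rs hrs
    obtain ⟨pq, hpq, rfl⟩ := Finset.mem_image.mp hrs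
    obtain ⟨hb1, hb2⟩ := hb pq hpq
    have hlet := (h1 pq hpq).2.2
    by_cases h0 : pq.1 = 0
    · simp only [rotF, if_pos h0]
      refine ⟨by omega, by rw [hlen']; omega, ?_⟩
      rw [hget (pq.2 - 1) (by omega), hgetl]
      have : pq.2 - 1 + 1 = pq.2 := by omega
      rw [this, ← h0, hlet]
    · simp only [rotF, if_neg h0]
      refine ⟨by omega, by rw [hlen']; omega, ?_⟩
      rw [hget (pq.1 - 1) (by omega), hget (pq.2 - 1) (by omega)]
      have e1 : pq.1 - 1 + 1 = pq.1 := by omega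
      have e2 : pq.2 - 1 + 1 = pq.2 := by omega
      rw [e1, e2, hlet]
  · -- condition 2
    intro j hj
    rw [hlen'] at hj
    by_cases hjl : j = wl
    · subst hjl
      obtain ⟨pq₀, ⟨hM0, hc0⟩, hu0⟩ := h2 0 (by rw [hlen]; omega)
      have hb0 := hb pq₀ hM0
      have h00 : pq₀.1 = 0 := by omega
      refine ⟨rotF wl pq₀, ⟨Finset.mem_image_of_mem _ hM0, ?_⟩, ?_⟩
      · right; simp [rotF, h00]
      · rintro rs ⟨hrsI, hrsc⟩
        obtain ⟨pq, hpqM, rfl⟩ := Finset.mem_image.mp hrsI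
        have hbp := hb pq hpqM
        by_cases h0 : pq.1 = 0
        · have : pq = pq₀ := hu0 pq ⟨hpqM, Or.inl h0⟩
          rw [this]
        · exfalso
          simp only [rotF, if_neg h0] at hrsc
          omega
    · obtain ⟨pq₁, ⟨hM1, hc1⟩, hu1⟩ := h2 (j + 1) (by rw [hlen]; omega)
      have hb1 := hb pq₁ hM1
      refine ⟨rotF wl pq₁, ⟨Finset.mem_image_of_mem _ hM1, ?_⟩, ?_⟩
      · by_cases h0 : pq₁.1 = 0
        · left; simp only [rotF, if_pos h0]; omega
        · simp only [rotF, if_neg h0]; omega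
      · rintro rs ⟨hrsI, hrsc⟩
        obtain ⟨pq, hpqM, rfl⟩ := Finset.mem_image.mp hrsI
        have hbp := hb pq hpqM
        have : pq = pq₁ := by
          apply hu1
          refine ⟨hpqM, ?_⟩
          by_cases h0 : pq.1 = 0
          · simp only [rotF, if_pos h0] at hrsc
            right; omega
          · simp only [rotF, if_neg h0] at hrsc
            omega
        rw [this]
  · -- condition 3 (non-crossing)
    rintro rs hrsI r's' hr'sI ⟨c1, c2, c3⟩
    obtain ⟨pq, hpq, rfl⟩ := Finset.mem_image.mp hrsI
    obtain ⟨pq', hpq', rfl⟩ := Finset.mem_image.mp hr'sI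
    have hbp := hb pq hpq
    have hbp' := hb pq' hpq'
    by_cases h0 : pq.1 = 0 <;> by_cases h0' : pq'.1 = 0
    · simp only [rotF, if_pos h0, if_pos h0'] at c1 c2 c3
      omega
    · simp only [rotF, if_pos h0, if_neg h0'] at c1 c2 c3
      omega
    · simp only [rotF, if_neg h0, if_pos h0'] at c1 c2 c3
      exact h3 pq' hpq' pq hpq ⟨by omega, by omega, by omega⟩
    · simp only [rotF, if_neg h0, if_neg h0'] at c1 c2 c3
      exact h3 pq hpq pq' hpq' ⟨by omega, by omega, by omega⟩

lemma rot_image_cancel (a : ℕ) (w : List ℕ) (M : Finset (ℕ × ℕ))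
    (h : IsNCPerfectMatching (a :: w) M) :
    (M.image (rotF w.length)).image (rotG w.length) = M := by
  rw [Finset.image_image]
  have : M.image (rotG w.length ∘ rotF w.length) = M.image id := by
    apply Finset.image_congr
    intro pq hpq
    have h1 := h.1 pq hpq
    simp only [List.length_cons] at h1
    exact rotG_rotF w.length pq h1.1 h1.2.1
  rw [this, Finset.image_id]

instance ncFinite (w : List ℕ) : Finite {M : Finset (ℕ × ℕ) // IsNCPerfectMatching w M} := by
  apply Finite.of_injective (β := {S : Finset (ℕ × ℕ) //
      S ∈ (Finset.range w.length ×ˢ Finset.range w.length).powerset})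
    (fun M => ⟨M.1, by
      rw [Finset.mem_powerset]
      intro pq hpq
      have := M.2.1 pq hpq
      simp only [Finset.mem_product, Finset.mem_range]
      omega⟩)
  intro M N h
  simp only [Subtype.mk.injEq] at h
  exact Subtype.ext h

lemma ncφ_le_rotate_one (u : List ℕ) : ncφ u ≤ ncφ (u.rotate 1) := by
  cases u with
  | nil => simp
  | cons a w =>
    have hr : (a :: w).rotate 1 = w ++ [a] := by
      rw [List.rotate_cons_succ, List.rotate_zero]
    rw [hr, ncφ, ncφ]
    apply Nat.card_le_card_of_injective
      (fun M : {M : Finset (ℕ × ℕ) // IsNCPerfectMatching (a :: w) M} =>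
        (⟨M.1.image (rotF w.length), rot_preserve a w M.1 M.2⟩ :
          {M : Finset (ℕ × ℕ) // IsNCPerfectMatching (w ++ [a]) M}))
    intro M N h
    have h' := congrArg Subtype.val h
    simp only at h'
    have : M.1 = N.1 := by
      rw [← rot_image_cancel a w M.1 M.2, ← rot_image_cancel a w N.1 N.2, h']
    exact Subtype.ext this

lemma ncφ_le_rotate (k : ℕ) (u : List ℕ) : ncφ u ≤ ncφ (u.rotate k) := by
  induction k with
  | zero => rw [List.rotate_zero]
  | succ n ih =>
    calc ncφ u ≤ ncφ (u.rotate n) := ih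
      _ ≤ ncφ ((u.rotate n).rotate 1) := ncφ_le_rotate_one _
      _ = ncφ (u.rotate (n + 1)) := by rw [List.rotate_rotate]

lemma ncφ_rotate_eq (k : ℕ) (u : List ℕ) (hk : k ≤ u.length) :
    ncφ u = ncφ (u.rotate k) := by
  refine le_antisymm (ncφ_le_rotate k u) ?_
  calc ncφ (u.rotate k) ≤ ncφ ((u.rotate k).rotate (u.length - k)) :=
        ncφ_le_rotate _ _
    _ = ncφ (u.rotate u.length) := by rw [List.rotate_rotate]; congr 2; omega
    _ = ncφ u := by rw [List.rotate_length]

/-- `φ` is tracial: `φ(I·J) = φ(J·I)`. -/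
theorem stmt11 (I J : List ℕ) : ncφ (I ++ J) = ncφ (J ++ I) := by
  have h := ncφ_rotate_eq I.length (I ++ J) (by simp)
  rw [List.rotate_append_length_eq] at h
  exact h
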